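/- Let c(n,k,0) denote the number of (n+k)-insets of a set X consisting of n main blocks of size 2 and no additional block. Then for all n ≥ 1 and 0 ≤ k ≤ n, the coefficient of x^{n-k} in the Chebyshev polynomial of the second kind U_{n+k}(x) equals (-1)^k · c(n,k,0). -/

import Mathlib

/-- The ground set: `n` main blocks, the `i`-th of size `p i`, plus an
additional block of size `m`. -/
abbrev InsetGround (n : ℕ) (p : Fin n → ℕ) (m : ℕ) : Type :=
  (Σ i : Fin n, Fin (p i)) ⊕ Fin m

/-- `F n p m k` is the number of `(n+k)`-subsets of the ground set that
intersect every main block (the "(n+k)-insets"). -/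
def F (n : ℕ) (p : Fin n → ℕ) (m k : ℕ) : ℕ :=
  ((Finset.univ : Finset (Finset (InsetGround n p m))).filter
    (fun U => U.card = n + k ∧
      ∀ i : Fin n, ∃ x : Σ j : Fin n, Fin (p j), x.1 = i ∧ Sum.inl x ∈ U)).card

namespace InsetAux

open Finset

variable {n : ℕ}

abbrev A (n : ℕ) := InsetGround n (fun _ => 2) 0

/-- the fiber of `U` over block `i` -/
def row (U : Finset (A n)) (i : Fin n) : Finset (Fin 2) :=
  Finset.univ.filter (fun j => Sum.inl ⟨i, j⟩ ∈ U)

lemma mem_row {U : Finset (A n)} {i : Fin n} {j : Fin 2} :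
    j ∈ row U i ↔ Sum.inl ⟨i, j⟩ ∈ U := by simp [row]

def proj : A n → Fin n := Sum.elim Sigma.fst Fin.elim0

lemma card_eq_sum_rows (U : Finset (A n)) : U.card = ∑ i, (row U i).card := by
  rw [Finset.card_eq_sum_card_fiberwise (f := proj) (t := Finset.univ)
    (fun x _ => Finset.mem_univ _)]
  refine Finset.sum_congr rfl fun i _ => ?_
  refine (Finset.card_nbij' (i := fun j => (Sum.inl ⟨i, j⟩ : A n))
    (j := fun x => Sum.elim (fun y : Σ _ : Fin n, Fin 2 => y.2) (fun _ => 0) x)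
    ?_ ?_ ?_ ?_).symm
  · intro j hj
    change _ ∈ Finset.filter _ _
    rw [Finset.mem_filter]
    simp only [Finset.mem_coe, Finset.mem_filter, proj, Sum.elim_inl]
    exact ⟨mem_row.1 hj, trivial⟩
  · rintro (⟨i', j⟩ | e) hx
    · change _ ∈ Finset.filter _ _ at hx
      rw [Finset.mem_filter] at hx
      simp only [Finset.mem_coe, Finset.mem_filter, proj, Sum.elim_inl] at hx
      obtain ⟨h1, h2⟩ := hx
      subst h2
      exact mem_row.2 h1
    · exact e.elim0
  · intro j hj; rfl
  · rintro (⟨i', j⟩ | e) hx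
    · change _ ∈ Finset.filter _ _ at hx
      rw [Finset.mem_filter] at hx
      simp only [Finset.mem_coe, Finset.mem_filter, proj, Sum.elim_inl] at hx ⊢
      obtain ⟨h1, h2⟩ := hx
      subst h2; rfl
    · exact e.elim0

lemma row_classify (r : Finset (Fin 2)) (h : r.Nonempty) :
    r = {0} ∨ r = {1} ∨ r = Finset.univ := by
  revert h; revert r; decide

/-- full rows of `U` -/
def fullRows (U : Finset (A n)) : Finset (Fin n) :=
  Finset.univ.filter (fun i => row U i = Finset.univ)

def gof (U : Finset (A n)) : Fin n → Fin 2 :=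
  fun i => if row U i = {1} then 1 else 0

def fwd (U : Finset (A n)) : Σ _ : Finset (Fin n), (Fin n → Fin 2) :=
  ⟨fullRows U, gof U⟩

open Classical in
noncomputable def bwd (b : Σ _ : Finset (Fin n), (Fin n → Fin 2)) : Finset (A n) :=
  Finset.univ.filter (fun x =>
    Sum.elim (fun y : Σ _ : Fin n, Fin 2 => y.1 ∈ b.1 ∨ y.2 = b.2 y.1) (fun _ => False) x)

lemma mem_bwd {b : Σ _ : Finset (Fin n), (Fin n → Fin 2)} {i : Fin n} {j : Fin 2} :
    (Sum.inl ⟨i, j⟩ : A n) ∈ bwd b ↔ (i ∈ b.1 ∨ j = b.2 i) := by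
  simp [bwd]

lemma row_bwd (b : Σ _ : Finset (Fin n), (Fin n → Fin 2)) (i : Fin n) :
    row (bwd b) i = if i ∈ b.1 then Finset.univ else {b.2 i} := by
  ext j
  rw [mem_row, mem_bwd]
  by_cases h : i ∈ b.1 <;> simp [h]

def T (n k : ℕ) : Finset (Σ _ : Finset (Fin n), (Fin n → Fin 2)) :=
  (Finset.univ.powersetCard k).sigma
    (fun S => Fintype.piFinset (fun i => if i ∈ S then ({0} : Finset (Fin 2)) else Finset.univ))

lemma filter_mem_eq (S : Finset (Fin n)) :
    Finset.univ.filter (fun i => i ∈ S) = S := by ext i; simp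

lemma card_T (k : ℕ) (hk : k ≤ n) : (T n k).card = n.choose k * 2 ^ (n - k) := by
  rw [T, Finset.card_sigma]
  have h : ∀ S ∈ (Finset.univ.powersetCard k : Finset (Finset (Fin n))),
      (Fintype.piFinset (fun i => if i ∈ S then ({0} : Finset (Fin 2)) else Finset.univ)).card
        = 2 ^ (n - k) := by
    intro S hS
    rw [Finset.mem_powersetCard_univ] at hS
    rw [Fintype.card_piFinset]
    have h1 : ∀ i : Fin n, (if i ∈ S then ({0} : Finset (Fin 2)) else Finset.univ).card
        = if i ∈ S then 1 else 2 := by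
      intro i; by_cases h : i ∈ S <;> simp [h]
    rw [Finset.prod_congr rfl (fun i _ => h1 i), Finset.prod_ite]
    simp only [Finset.prod_const, one_pow, one_mul]
    congr 1
    rw [Finset.filter_not, Finset.card_sdiff_of_subset (Finset.filter_subset _ _)]
    rw [filter_mem_eq, hS, Finset.card_univ, Fintype.card_fin]
  rw [Finset.sum_congr rfl h, Finset.sum_const, Finset.card_powersetCard,
    Finset.card_univ, Fintype.card_fin, smul_eq_mul]

lemma rows_nonempty {U : Finset (A n)}
    (hins : ∀ i : Fin n, ∃ x : Σ j : Fin n, Fin 2, x.1 = i ∧ Sum.inl x ∈ U) (i : Fin n) :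
    (row U i).Nonempty := by
  obtain ⟨x, hx1, hx2⟩ := hins i
  refine ⟨x.2, mem_row.2 ?_⟩
  subst hx1
  exact hx2

lemma F_eq (k : ℕ) (hk : k ≤ n) : F n (fun _ => 2) 0 k = n.choose k * 2 ^ (n - k) := by
  rw [← card_T k hk, F]
  apply Finset.card_nbij' fwd bwd
  · -- fwd maps to T
    intro U hU
    simp only [Finset.mem_coe, Finset.mem_filter, Finset.mem_univ, true_and] at hU
    obtain ⟨hcard, hins⟩ := hU
    have hne := rows_nonempty hins
    have hfm : ∀ i, i ∈ fullRows U ↔ row U i = Finset.univ := by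
      intro i; simp [fullRows]
    have hrc : ∀ i, (row U i).card = 1 + (if i ∈ fullRows U then 1 else 0) := by
      intro i
      rcases row_classify _ (hne i) with h | h | h <;> simp only [hfm, h] <;> decide
    have hsum : n + k = n + (fullRows U).card := by
      rw [← hcard, card_eq_sum_rows U, Finset.sum_congr rfl (fun i _ => hrc i),
        Finset.sum_add_distrib, Finset.sum_const, ← Finset.card_filter]
      rw [show Finset.univ.filter (fun i => i ∈ fullRows U) = fullRows U from
        filter_mem_eq _]
      simp
    have hSk : (fullRows U).card = k := by omega
    rw [T, Finset.mem_coe, Finset.mem_sigma]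
    refine ⟨Finset.mem_powersetCard_univ.2 hSk, ?_⟩
    rw [Fintype.mem_piFinset]
    intro i
    show gof U i ∈ if i ∈ fullRows U then ({0} : Finset (Fin 2)) else Finset.univ
    by_cases h : i ∈ fullRows U
    · rw [if_pos h]
      have hrow : row U i = Finset.univ := (hfm i).1 h
      rw [gof, hrow, if_neg (by decide)]
      decide
    · rw [if_neg h]
      exact Finset.mem_univ _
  · -- bwd maps to filter
    rintro ⟨S, g⟩ hb
    rw [T, Finset.mem_coe, Finset.mem_sigma, Finset.mem_powersetCard_univ, Fintype.mem_piFinset] at hb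
    dsimp only at hb
    obtain ⟨hS, hg⟩ := hb
    simp only [Finset.mem_coe, Finset.mem_filter, Finset.mem_univ, true_and]
    constructor
    · rw [card_eq_sum_rows]
      have h : ∀ i : Fin n, (row (bwd ⟨S, g⟩) i).card = 1 + (if i ∈ S then 1 else 0) := by
        intro i
        rw [row_bwd]
        by_cases h : i ∈ S <;> simp [h]
      rw [Finset.sum_congr rfl (fun i _ => h i), Finset.sum_add_distrib,
        Finset.sum_const, ← Finset.card_filter, filter_mem_eq, hS]
      simp
    · intro i
      exact ⟨⟨i, g i⟩, rfl, mem_bwd.2 (Or.inr rfl)⟩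
  · -- left inverse
    intro U hU
    simp only [Finset.mem_coe, Finset.mem_filter, Finset.mem_univ, true_and] at hU
    obtain ⟨hcard, hins⟩ := hU
    have hne := rows_nonempty hins
    ext x
    rcases x with ⟨i, j⟩ | e
    · revert j
      show ∀ j : Fin 2, ((Sum.inl ⟨i, j⟩ : A n) ∈ bwd (fwd U) ↔ Sum.inl ⟨i, j⟩ ∈ U)
      intro j
      rw [mem_bwd, ← mem_row]
      show (i ∈ fullRows U ∨ j = gof U i) ↔ _
      have hfm : (i ∈ fullRows U) = (row U i = Finset.univ) := by
        simp [fullRows]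
      rw [hfm]
      simp only [gof]
      rcases row_classify _ (hne i) with h | h | h <;> rw [h] <;> revert j <;> decide
    · exact e.elim0
  · -- right inverse
    rintro ⟨S, g⟩ hb
    rw [T, Finset.mem_coe, Finset.mem_sigma, Finset.mem_powersetCard_univ, Fintype.mem_piFinset] at hb
    dsimp only at hb
    obtain ⟨hS, hg⟩ := hb
    have hg0 : ∀ i ∈ S, g i = 0 := by
      intro i hi
      have h := hg i
      rw [if_pos hi] at h
      simpa using h
    have hSeq : fullRows (bwd ⟨S, g⟩) = S := by
      ext i
      simp only [fullRows, Finset.mem_filter, Finset.mem_univ, true_and, row_bwd]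
      by_cases h : i ∈ S
      · simp [h]
      · rw [if_neg h]
        simp only [h, iff_false]
        have hx : ∀ a : Fin 2, ({a} : Finset (Fin 2)) ≠ Finset.univ := by decide
        exact hx (g i)
    show (⟨fullRows (bwd ⟨S, g⟩), gof (bwd ⟨S, g⟩)⟩ :
      Σ _ : Finset (Fin n), (Fin n → Fin 2)) = ⟨S, g⟩
    rw [hSeq]
    congr 1
    funext i
    simp only [gof, row_bwd]
    by_cases h : i ∈ S
    · rw [if_pos h, hg0 i h, if_neg (by decide : ¬ (Finset.univ : Finset (Fin 2)) = {1})]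
    · rw [if_neg h]
      have hx : ∀ a : Fin 2, (if ({a} : Finset (Fin 2)) = {1} then (1 : Fin 2) else 0) = a := by
        decide
      exact hx (g i)

end InsetAux

open Polynomial in
lemma Ucoeff : ∀ m d : ℕ, (Chebyshev.U ℤ m).coeff d =
    if d ≤ m ∧ 2 ∣ (m - d) then
      (-1 : ℤ) ^ ((m - d) / 2) * (((m + d) / 2).choose ((m - d) / 2)) * 2 ^ d
    else 0 := by
  intro m
  induction m using Nat.strong_induction_on with
  | _ m ih =>
  match m with
  | 0 =>
    intro d
    simp only [Nat.cast_zero, Chebyshev.U_zero, coeff_one]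
    rcases Nat.eq_zero_or_pos d with rfl | hd
    · norm_num
    · rw [if_neg (by omega), if_neg (by omega)]
  | 1 =>
    intro d
    simp only [Nat.cast_one, Chebyshev.U_one, coeff_ofNat_mul, coeff_X]
    match d with
    | 0 => norm_num
    | 1 => norm_num
    | (d+2) => rw [if_neg (by omega), if_neg (by omega)]; ring
  | (m+2) =>
    intro d
    have h2 : ((m : ℤ) + 2) = ((m:ℕ) : ℤ) + 2 := by push_cast; ring
    rw [show (((m+2:ℕ)):ℤ) = ((m:ℕ):ℤ) + 2 by push_cast; ring,
      Chebyshev.U_add_two, coeff_sub, show ((m:ℤ)+1) = ((m+1:ℕ):ℤ) by push_cast; ring]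
    rw [mul_assoc, coeff_ofNat_mul, X_mul]
    match d with
    | 0 =>
      rw [coeff_mul_X_zero, mul_zero, zero_sub, ih m (by omega) 0]
      rcases Nat.even_or_odd m with ⟨j, hj⟩ | hodd
      · rw [if_pos (by omega), if_pos (by omega)]
        have h1 : (m - 0) / 2 = j := by omega
        have h2 : (m + 2 - 0) / 2 = j + 1 := by omega
        have h3 : (m + 0) / 2 = j := by omega
        have h4 : (m + 2 + 0) / 2 = j + 1 := by omega
        rw [h1, h2, h3, h4, Nat.choose_self, Nat.choose_self]
        ring
      · obtain ⟨j, hj⟩ := hodd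
        rw [if_neg (by omega), if_neg (by omega), neg_zero]
    | (d'+1) =>
      rw [coeff_mul_X, ih (m+1) (by omega) d', ih m (by omega) (d'+1)]
      rw [show d' = d' + 1 - 1 from rfl]
      obtain ⟨d, hdd⟩ : ∃ d, d' + 1 = d := ⟨_, rfl⟩
      rw [hdd]
      have hd : 1 ≤ d := by omega
      rw [show d - 1 + 1 = d from by omega]
      -- case analysis
      rcases lt_trichotomy d (m+1) with hlt | rfl | hgt
      · -- d ≤ m
        have hdm : d ≤ m := by omega
        by_cases hpar : 2 ∣ (m - d)
        · obtain ⟨j, hj⟩ := hpar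
          rw [if_pos (by omega), if_pos ⟨by omega, by omega⟩, if_pos ⟨by omega, by omega⟩]
          have e1 : (m + 1 - (d-1)) / 2 = j + 1 := by omega
          have e2 : (m + 1 + (d-1)) / 2 = (m + d) / 2 := by omega
          have e3 : (m - d) / 2 = j := by omega
          have e4 : (m + 2 - d) / 2 = j + 1 := by omega
          have e5 : (m + 2 + d) / 2 = (m + d)/2 + 1 := by omega
          rw [e1, e2, e3, e4, e5, Nat.choose_succ_succ ((m+d)/2) j]
          have : d - 1 + 1 = d := by omega
          rw [← this]
          push_cast [Nat.choose_succ_succ]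
          ring
        · rw [if_neg (by omega), if_neg (by omega), if_neg (by omega)]
          ring
      · -- d = m + 1
        rw [if_neg (by omega), if_neg (by omega), if_neg (by omega)]
        ring
      · rcases Nat.lt_or_ge d (m+2) with h | h
        · omega
        rcases Nat.eq_or_lt_of_le h with rfl | hgt2
        · -- d = m+2
          rw [if_pos ⟨by omega, by omega⟩, if_neg (by omega), if_pos ⟨by omega, by omega⟩]
          rw [show (m + 1 - (m + 2 - 1)) / 2 = 0 from by omega,
            show (m + 2 - (m + 2)) / 2 = 0 from by omega,
            show m + 2 - 1 = m + 1 from by omega]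
          simp only [Nat.choose_zero_right, pow_zero, Nat.cast_one]
          ring
        · rw [if_neg (by omega), if_neg (by omega), if_neg (by omega)]
          ring

open Polynomial in
theorem stmt_12 (n k : ℕ) (hn : 1 ≤ n) (hk : k ≤ n) :
    (Chebyshev.U ℤ ((n : ℤ) + k)).coeff (n - k) =
      (-1 : ℤ) ^ k * (F n (fun _ => 2) 0 k : ℤ) := by
  rw [show ((n : ℤ) + k) = ((n + k : ℕ) : ℤ) by push_cast; ring, Ucoeff (n + k) (n - k),
    if_pos ⟨by omega, by omega⟩, InsetAux.F_eq k hk,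
    show (n + k - (n - k)) / 2 = k from by omega,
    show (n + k + (n - k)) / 2 = n from by omega]
  push_cast
  ring
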